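/- Let η₁, η₂ be the roots of x² + x − 1 with η₁ ≠ η₂, P = [[1,1],[η₁,η₂]], G_unit = [[6,−3],[−3,14]]. For positive reals a, b, let M = P·diag(a,b)·P⁻¹ and G' = M·G_unit·Mᵀ. Then the upper half plane point (x, y) with x = G'₀₁/G'₀₀ and y = √(G'₁₁/G'₀₀ − x²) satisfies (x + 1/2)² + (y − 1/(2√3))² = (2/√3)². -/

import Mathlib

open Matrix

set_option maxHeartbeats 1000000 in
/-- Let `η₁ ≠ η₂` be the roots of `x² + x − 1`, `P = [[1,1],[η₁,η₂]]`,
`G_unit = [[6,−3],[−3,14]]`. For positive reals `a, b`, with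
`M = P·diag(a,b)·P⁻¹` and `G' = M·G_unit·Mᵀ`, the upper-half-plane point
`(x, y)` of `G'` lies on the circle `(x+1/2)² + (y−1/(2√3))² = (2/√3)²`. -/
theorem stmt13 (η₁ η₂ : ℝ) (h₁ : η₁ ^ 2 + η₁ - 1 = 0) (h₂ : η₂ ^ 2 + η₂ - 1 = 0)
    (hne : η₁ ≠ η₂) (a b : ℝ) (ha : 0 < a) (hb : 0 < b) :
    let P : Matrix (Fin 2) (Fin 2) ℝ := !![1, 1; η₁, η₂]
    let Gunit : Matrix (Fin 2) (Fin 2) ℝ := !![6, -3; -3, 14]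
    let M : Matrix (Fin 2) (Fin 2) ℝ := P * Matrix.diagonal ![a, b] * P⁻¹
    let G' : Matrix (Fin 2) (Fin 2) ℝ := M * Gunit * Mᵀ
    let x : ℝ := G' 0 1 / G' 0 0
    let y : ℝ := Real.sqrt (G' 1 1 / G' 0 0 - x ^ 2)
    (x + 1 / 2) ^ 2 + (y - 1 / (2 * Real.sqrt 3)) ^ 2 = (2 / Real.sqrt 3) ^ 2 := by
  have hs : η₂ = -1 - η₁ := by
    have h0 : (η₁ - η₂) * (η₁ + η₂ + 1) = 0 := by linear_combination h₁ - h₂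
    rcases mul_eq_zero.1 h0 with h | h
    · exact absurd (by linarith) hne
    · linarith
  subst hs
  set t := η₁ with ht
  have hd : (-1 - t) - t ≠ 0 := by
    intro h
    have : t = -1/2 := by linarith
    rw [this] at h₁; norm_num at h₁
  have hd' : (-1 - 2*t) ≠ 0 := by intro h; exact hd (by linarith)
  have hd2 : (-1 - t*2) ≠ 0 := by intro h; exact hd (by linarith)
  have hd3 : 1 + t*4 + t^2*4 ≠ 0 := by
    have : 1 + t*4 + t^2*4 = (-1 - t*2)^2 := by ring
    rw [this]; exact pow_ne_zero 2 hd2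
  intro P Gunit M G' x y
  have hD : Matrix.diagonal ![a, b] = !![a, 0; 0, b] := by
    ext i j; fin_cases i <;> fin_cases j <;> simp [Matrix.diagonal]
  have hPinv : P⁻¹ = !![(-1 - t)/(-1 - 2*t), -1/(-1 - 2*t); -t/(-1 - 2*t), 1/(-1 - 2*t)] := by
    apply inv_eq_right_inv
    show (!![1, 1; t, -1 - t] : Matrix (Fin 2) (Fin 2) ℝ) * _ = 1
    ext i j
    fin_cases i <;> fin_cases j <;>
      simp [Matrix.mul_apply, Fin.sum_univ_two] <;> field_simp <;> ring
  have hM : M = !![(a*(-1-t) - b*t)/(-1-2*t), (b-a)/(-1-2*t);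
                   (b-a)/(-1-2*t), (b*(-1-t) - a*t)/(-1-2*t)] := by
    show P * Matrix.diagonal ![a, b] * P⁻¹ = _
    rw [hD, hPinv]
    show (!![1, 1; t, -1 - t] : Matrix (Fin 2) (Fin 2) ℝ) * _ * _ = _
    ext i j
    fin_cases i <;> fin_cases j <;>
      simp [Matrix.mul_apply, Fin.sum_univ_two] <;> field_simp
    · ring
    · ring
    · linear_combination (b - a) * h₁
    · ring
  have e00 : G' 0 0 = 4*a^2 - 2*a*b + 4*b^2 := by
    show (M * !![(6:ℝ), -3; -3, 14] * Mᵀ) 0 0 = _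
    rw [hM]
    simp [Matrix.mul_apply, Matrix.transpose_apply, Fin.sum_univ_two, Matrix.cons_val_zero,
      Matrix.cons_val_one, Matrix.head_cons, Matrix.head_fin_const, Matrix.cons_val',
      Matrix.empty_val', Matrix.cons_val_fin_one, Matrix.vecHead, Matrix.vecTail]
    field_simp
    linear_combination (-10*(a-b)^2) * h₁
  have key2 : G' 0 1 + G' 1 1 - G' 0 0 = 5*a*b := by
    show (M * !![(6:ℝ), -3; -3, 14] * Mᵀ) 0 1 + (M * !![(6:ℝ), -3; -3, 14] * Mᵀ) 1 1 - (M * !![(6:ℝ), -3; -3, 14] * Mᵀ) 0 0 = _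
    rw [hM]
    simp [Matrix.mul_apply, Matrix.transpose_apply, Fin.sum_univ_two, Matrix.cons_val_zero,
      Matrix.cons_val_one, Matrix.head_cons, Matrix.head_fin_const, Matrix.cons_val',
      Matrix.empty_val', Matrix.cons_val_fin_one, Matrix.vecHead, Matrix.vecTail]
    field_simp
    linear_combination (5*(a-b)^2) * h₁
  have e01 : G' 0 1 = a*b - 4*b^2 + 4*t*a^2 - 4*t*b^2 := by
    show (M * !![(6:ℝ), -3; -3, 14] * Mᵀ) 0 1 = _
    rw [hM]
    simp [Matrix.mul_apply, Matrix.transpose_apply, Fin.sum_univ_two, Matrix.cons_val_zero,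
      Matrix.cons_val_one, Matrix.head_cons, Matrix.head_fin_const, Matrix.cons_val',
      Matrix.empty_val', Matrix.cons_val_fin_one, Matrix.vecHead, Matrix.vecTail]
    field_simp
    linear_combination (-16*a^2*t + 16*b^2*t - 10*a*b - 3*a^2 + 13*b^2) * h₁
  have e11 : G' 1 1 = 4*a^2 + 2*a*b + 8*b^2 - 4*t*a^2 + 4*t*b^2 := by
    show (M * !![(6:ℝ), -3; -3, 14] * Mᵀ) 1 1 = _
    rw [hM]
    simp [Matrix.mul_apply, Matrix.transpose_apply, Fin.sum_univ_two, Matrix.cons_val_zero,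
      Matrix.cons_val_one, Matrix.head_cons, Matrix.head_fin_const, Matrix.cons_val',
      Matrix.empty_val', Matrix.cons_val_fin_one, Matrix.vecHead, Matrix.vecTail]
    field_simp
    linear_combination (16*a^2*t - 16*b^2*t - 18*b^2 + 20*a*b - 2*a^2) * h₁
  have key3 : G' 1 1 * G' 0 0 - G' 0 1 ^ 2 = 75*a^2*b^2 := by
    rw [e00, e01, e11]
    linear_combination ((-16)*b^4 + (32)*a^2*b^2 + (-16)*a^4) * h₁
  have hgpos : 0 < G' 0 0 := by
    rw [e00]; nlinarith [sq_nonneg (a - b), mul_pos ha hb]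
  have hxdef : x = G' 0 1 / G' 0 0 := rfl
  have s3 : Real.sqrt 3 ^ 2 = 3 := Real.sq_sqrt (by norm_num)
  have s3pos : (0:ℝ) < Real.sqrt 3 := Real.sqrt_pos.2 (by norm_num)
  have hyval : y = Real.sqrt 3 * (5*a*b) / G' 0 0 := by
    have harg : G' 1 1 / G' 0 0 - x ^ 2 = (Real.sqrt 3 * (5*a*b) / G' 0 0) ^ 2 := by
      rw [hxdef]
      field_simp
      linear_combination key3 + (-25*a^2*b^2) * s3
    show Real.sqrt _ = _
    rw [harg, Real.sqrt_sq (by positivity)]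
  rw [hyval, hxdef]
  field_simp
  linear_combination (12*(G' 0 0)) * key2 + (-12) * key3 +
    ((2*(G' 0 1) + G' 0 0)^2 + 100*((Real.sqrt 3)^2 + 3)*a^2*b^2 - 20*a*b*(G' 0 0)) * s3
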